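/- Fix ρ > 0 and define E₀(ρ,Γ) = (1/2)[(1−β₀)(1+ρ) + Γ + log(β₀ − Γ/(1+ρ)) + ρ·log β₀] with β₀ as in Gallager's formula. Then as Γ → 0⁺, E₀(ρ,Γ) = (1/2)·(ρ/(1+ρ))·Γ + O(Γ²). -/

import Mathlib

open Filter Asymptotics

noncomputable def qf (ρ t : ℝ) : ℝ := 1 - 4 * t * ρ / (1 + ρ + t) ^ 2
noncomputable def sf (ρ t : ℝ) : ℝ := Real.sqrt (qf ρ t)
noncomputable def bf (ρ t : ℝ) : ℝ := 1 / 2 * (1 + t / (1 + ρ)) * (1 + sf ρ t)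
noncomputable def Ef (ρ t : ℝ) : ℝ := 1 / 2 * ((1 - bf ρ t) * (1 + ρ) + t +
  Real.log (bf ρ t - t / (1 + ρ)) + ρ * Real.log (bf ρ t))
noncomputable def gf (ρ t : ℝ) : ℝ := Ef ρ t - 1 / 2 * (ρ / (1 + ρ)) * t

noncomputable def qd (ρ t : ℝ) : ℝ :=
  -((4 * 1 * ρ * (1 + ρ + t) ^ 2 - 4 * t * ρ * ((2 : ℕ) * (1 + ρ + t) ^ (2 - 1) * 1)) /
    ((1 + ρ + t) ^ 2) ^ 2)
noncomputable def sd (ρ t : ℝ) : ℝ := qd ρ t / (2 * sf ρ t)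
noncomputable def bd (ρ t : ℝ) : ℝ :=
  1 / 2 * (1 / (1 + ρ)) * (1 + sf ρ t) + 1 / 2 * (1 + t / (1 + ρ)) * sd ρ t
noncomputable def gd (ρ t : ℝ) : ℝ :=
  1 / 2 * (-(bd ρ t) * (1 + ρ) + 1 + (bd ρ t - 1 / (1 + ρ)) / (bf ρ t - t / (1 + ρ))
    + ρ * (bd ρ t / bf ρ t)) - 1 / 2 * (ρ / (1 + ρ)) * 1

lemma hasDerivAt_qf (ρ t : ℝ) (h : (1 : ℝ) + ρ + t ≠ 0) : HasDerivAt (qf ρ) (qd ρ t) t := by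
  have h1 : HasDerivAt (fun t : ℝ => 4 * t * ρ) (4 * 1 * ρ) t :=
    ((hasDerivAt_id' (x := t)).const_mul 4).mul_const ρ
  have h2 : HasDerivAt (fun t : ℝ => (1 + ρ + t) ^ 2)
      ((2 : ℕ) * (1 + ρ + t) ^ (2 - 1) * 1) t :=
    ((hasDerivAt_id' (x := t)).const_add (1 + ρ)).pow 2
  exact (h1.div h2 (pow_ne_zero 2 h)).const_sub 1

lemma hasDerivAt_sf (ρ t : ℝ) (h : (1 : ℝ) + ρ + t ≠ 0) (hq : qf ρ t ≠ 0) :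
    HasDerivAt (sf ρ) (sd ρ t) t := by
  exact (hasDerivAt_qf ρ t h).sqrt hq

lemma hasDerivAt_bf (ρ t : ℝ) (h : (1 : ℝ) + ρ + t ≠ 0) (hq : qf ρ t ≠ 0) :
    HasDerivAt (bf ρ) (bd ρ t) t := by
  have h1 : HasDerivAt (fun t : ℝ => 1 / 2 * (1 + t / (1 + ρ))) (1 / 2 * (1 / (1 + ρ))) t :=
    (((hasDerivAt_id' (x := t)).div_const (1 + ρ)).const_add 1).const_mul (1 / 2)
  have h2 : HasDerivAt (fun t : ℝ => 1 + sf ρ t) (sd ρ t) t :=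
    (hasDerivAt_sf ρ t h hq).const_add 1
  exact h1.mul h2

lemma hasDerivAt_gf (ρ t : ℝ) (h : (1 : ℝ) + ρ + t ≠ 0) (hq : qf ρ t ≠ 0)
    (h3 : bf ρ t - t / (1 + ρ) ≠ 0) (h4 : bf ρ t ≠ 0) :
    HasDerivAt (gf ρ) (gd ρ t) t := by
  have hb := hasDerivAt_bf ρ t h hq
  have hA : HasDerivAt (fun t : ℝ => (1 - bf ρ t) * (1 + ρ) + t)
      (-(bd ρ t) * (1 + ρ) + 1) t :=
    ((hb.const_sub 1).mul_const (1 + ρ)).add (hasDerivAt_id' (x := t))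
  have hC : HasDerivAt (fun t : ℝ => Real.log (bf ρ t - t / (1 + ρ)))
      ((bd ρ t - 1 / (1 + ρ)) / (bf ρ t - t / (1 + ρ))) t := by
    exact (hb.sub ((hasDerivAt_id' (x := t)).div_const (1 + ρ))).log h3
  have hD : HasDerivAt (fun t : ℝ => ρ * Real.log (bf ρ t)) (ρ * (bd ρ t / bf ρ t)) t :=
    (hb.log h4).const_mul ρ
  have hEe : HasDerivAt (Ef ρ)
      (1 / 2 * (-(bd ρ t) * (1 + ρ) + 1 + (bd ρ t - 1 / (1 + ρ)) / (bf ρ t - t / (1 + ρ))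
        + ρ * (bd ρ t / bf ρ t))) t := by
    exact ((hA.add hC).add hD).const_mul (1 / 2)
  have hLast : HasDerivAt (fun t : ℝ => 1 / 2 * (ρ / (1 + ρ)) * t)
      (1 / 2 * (ρ / (1 + ρ)) * 1) t :=
    (hasDerivAt_id' (x := t)).const_mul (1 / 2 * (ρ / (1 + ρ)))
  exact hEe.sub hLast

lemma qf_zero (ρ : ℝ) : qf ρ 0 = 1 := by simp [qf]

lemma sf_zero (ρ : ℝ) : sf ρ 0 = 1 := by simp [sf, qf_zero]

lemma bf_zero (ρ : ℝ) : bf ρ 0 = 1 := by norm_num [bf, sf_zero]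

lemma gf_zero (ρ : ℝ) : gf ρ 0 = 0 := by simp [gf, Ef, bf_zero]

lemma qd_zero (ρ : ℝ) (hρ : 0 < ρ) : qd ρ 0 = -(4 * ρ / (1 + ρ) ^ 2) := by
  have h : (1 : ℝ) + ρ ≠ 0 := by positivity
  simp only [qd]
  field_simp
  ring

lemma bd_zero (ρ : ℝ) (hρ : 0 < ρ) : bd ρ 0 = 1 / (1 + ρ) ^ 2 := by
  have h : (1 : ℝ) + ρ ≠ 0 := by positivity
  simp only [bd, sd, sf_zero, qd_zero ρ hρ]
  field_simp
  ring

lemma gd_zero (ρ : ℝ) (hρ : 0 < ρ) : gd ρ 0 = 0 := by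
  have h : (1 : ℝ) + ρ ≠ 0 := by positivity
  simp only [gd, bd_zero ρ hρ, bf_zero]
  field_simp
  ring

lemma diff_gd (ρ : ℝ) (hρ : 0 < ρ) : DifferentiableAt ℝ (gd ρ) 0 := by
  have hc : (1 : ℝ) + ρ + 0 ≠ 0 := by norm_num; linarith
  have hq : qf ρ 0 ≠ 0 := by rw [qf_zero]; norm_num
  have hsf : DifferentiableAt ℝ (sf ρ) 0 := (hasDerivAt_sf ρ 0 hc hq).differentiableAt
  have hbf : DifferentiableAt ℝ (bf ρ) 0 := (hasDerivAt_bf ρ 0 hc hq).differentiableAt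
  have hqd : DifferentiableAt ℝ (qd ρ) 0 := by
    unfold qd
    apply DifferentiableAt.neg
    apply DifferentiableAt.div (by fun_prop) (by fun_prop)
    exact pow_ne_zero 2 (pow_ne_zero 2 hc)
  have hsd : DifferentiableAt ℝ (sd ρ) 0 := by
    unfold sd
    apply hqd.div (hsf.const_mul 2)
    rw [sf_zero]; norm_num
  have hbd : DifferentiableAt ℝ (bd ρ) 0 := by
    unfold bd
    exact ((hsf.const_add 1).const_mul _).add
      ((((differentiableAt_fun_id.div_const _).const_add 1).const_mul _).mul hsd)
  have h3 : bf ρ 0 - (0 : ℝ) / (1 + ρ) ≠ 0 := by rw [bf_zero]; norm_num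
  have h4 : bf ρ 0 ≠ 0 := by rw [bf_zero]; norm_num
  unfold gd
  apply DifferentiableAt.sub_const
  apply DifferentiableAt.const_mul
  exact (((hbd.neg.mul_const _).add_const 1).add
    ((hbd.sub_const _).div (hbf.sub (differentiableAt_fun_id.div_const _)) h3)).add
    ((hbd.div hbf h4).const_mul ρ)

theorem E0_low_snr (ρ : ℝ) (hρ : 0 < ρ)
    (β₀ : ℝ → ℝ) (hβ : ∀ Γ, β₀ Γ = (1 / 2) * (1 + Γ / (1 + ρ)) *
      (1 + Real.sqrt (1 - 4 * Γ * ρ / (1 + ρ + Γ) ^ 2)))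
    (E₀ : ℝ → ℝ) (hE : ∀ Γ, E₀ Γ = (1 / 2) * ((1 - β₀ Γ) * (1 + ρ) + Γ +
      Real.log (β₀ Γ - Γ / (1 + ρ)) + ρ * Real.log (β₀ Γ))) :
    (fun Γ => E₀ Γ - (1 / 2) * (ρ / (1 + ρ)) * Γ) =O[nhdsWithin 0 (Set.Ioi 0)]
      (fun Γ : ℝ => Γ ^ 2) := by
  have hfun : (fun Γ => E₀ Γ - (1 / 2) * (ρ / (1 + ρ)) * Γ) = gf ρ := by
    funext t
    simp only [gf, Ef, bf, sf, qf, hE t, hβ t]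
  rw [hfun]
  have hcpos : (0 : ℝ) < 1 + ρ := by linarith
  -- eventual positivity conditions
  have ev1 : ∀ᶠ t : ℝ in nhds 0, 0 < 1 + ρ + t := by
    have hco : ContinuousAt (fun t : ℝ => 1 + ρ + t) 0 := by fun_prop
    exact hco.eventually (eventually_gt_nhds (show (0:ℝ) < 1 + ρ + 0 by linarith))
  have hne0 : (1:ℝ) + ρ + 0 ≠ 0 := by norm_num; linarith
  have cq : ContinuousAt (qf ρ) 0 := (hasDerivAt_qf ρ 0 hne0).continuousAt
  have ev2 : ∀ᶠ t : ℝ in nhds 0, 0 < qf ρ t := by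
    have := cq.eventually (eventually_gt_nhds (show (0:ℝ) < qf ρ 0 by rw [qf_zero]; norm_num))
    simpa using this
  have hq0 : qf ρ 0 ≠ 0 := by rw [qf_zero]; norm_num
  have cb : ContinuousAt (bf ρ) 0 := (hasDerivAt_bf ρ 0 hne0 hq0).continuousAt
  have ev3 : ∀ᶠ t : ℝ in nhds 0, 0 < bf ρ t - t / (1 + ρ) := by
    have hco : ContinuousAt (fun t : ℝ => bf ρ t - t / (1 + ρ)) 0 :=
      cb.sub (continuousAt_id.div_const _)
    have := hco.eventually (eventually_gt_nhds
      (show (0:ℝ) < bf ρ 0 - 0 / (1 + ρ) by simp [bf_zero]))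
    simpa using this
  have ev4 : ∀ᶠ t : ℝ in nhds 0, 0 < bf ρ t := by
    have := cb.eventually (eventually_gt_nhds (show (0:ℝ) < bf ρ 0 by rw [bf_zero]; norm_num))
    simpa using this
  -- bound on the derivative
  obtain ⟨C, hC⟩ := (diff_gd ρ hρ).isBigO_sub.bound
  set C' := max C 0 with hC'
  have hC'0 : 0 ≤ C' := le_max_right _ _
  have evb : ∀ᶠ t : ℝ in nhds 0, ‖gd ρ t‖ ≤ C' * ‖t‖ := by
    filter_upwards [hC] with t ht
    rw [gd_zero ρ hρ, sub_zero, sub_zero] at ht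
    exact ht.trans (mul_le_mul_of_nonneg_right (le_max_left _ _) (norm_nonneg _))
  have evAll : ∀ᶠ t : ℝ in nhds 0,
      (0 < 1 + ρ + t ∧ 0 < qf ρ t ∧ 0 < bf ρ t - t / (1 + ρ) ∧ 0 < bf ρ t) ∧
        ‖gd ρ t‖ ≤ C' * ‖t‖ := by
    filter_upwards [ev1, ev2, ev3, ev4, evb] with t h1 h2 h3 h4 h5
    exact ⟨⟨h1, h2, h3, h4⟩, h5⟩
  rw [Metric.eventually_nhds_iff] at evAll
  obtain ⟨δ, hδ, hball⟩ := evAll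
  rw [isBigO_iff]
  refine ⟨C', ?_⟩
  filter_upwards [Ioo_mem_nhdsGT_of_mem (Set.mem_Ico.mpr ⟨le_refl (0:ℝ), hδ⟩)] with x hx
  obtain ⟨hx0, hxδ⟩ := hx
  have hIcc : ∀ t ∈ Set.Icc (0:ℝ) x,
      (0 < 1 + ρ + t ∧ 0 < qf ρ t ∧ 0 < bf ρ t - t / (1 + ρ) ∧ 0 < bf ρ t) ∧
        ‖gd ρ t‖ ≤ C' * ‖t‖ := by
    intro t ht
    apply hball
    rw [Real.dist_eq, sub_zero, abs_of_nonneg ht.1]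
    exact lt_of_le_of_lt ht.2 hxδ
  have key : ‖gf ρ x - gf ρ 0‖ ≤ C' * x * ‖x - 0‖ := by
    apply (convex_Icc (0:ℝ) x).norm_image_sub_le_of_norm_hasDerivWithin_le
      (f := gf ρ) (f' := gd ρ)
    · intro t ht
      obtain ⟨⟨h1, h2, h3, h4⟩, _⟩ := hIcc t ht
      exact (hasDerivAt_gf ρ t (ne_of_gt h1) (ne_of_gt h2) (ne_of_gt h3)
        (ne_of_gt h4)).hasDerivWithinAt
    · intro t ht
      obtain ⟨_, h5⟩ := hIcc t ht
      refine h5.trans ?_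
      have : ‖t‖ ≤ x := by
        rw [Real.norm_eq_abs, abs_of_nonneg ht.1]; exact ht.2
      exact mul_le_mul_of_nonneg_left this hC'0
    · exact Set.mem_Icc.mpr ⟨le_refl 0, hx0.le⟩
    · exact Set.mem_Icc.mpr ⟨hx0.le, le_refl x⟩
  rw [gf_zero, sub_zero, sub_zero] at key
  calc ‖gf ρ x‖ ≤ C' * x * ‖x‖ := key
    _ = C' * ‖x ^ 2‖ := by
        rw [Real.norm_eq_abs, Real.norm_eq_abs, abs_of_nonneg hx0.le,
          abs_of_nonneg (sq_nonneg x)]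
        ring
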